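/- Let α, β be generic length vectors on {1,…,m}. The genetic code G(β) covers G(α) in the genetic order (i.e., G(α) ≺ G(β) and no genetic code lies strictly between them) if and only if S_m(β) = S_m(α) ∪ {J} for exactly one subset J ⊆ {1,…,m} not in S_m(α). -/

import Mathlib

open Finset

def IsGeneric {m : ℕ} (α : Fin m → ℝ) : Prop :=
  ∀ ε : Fin m → ℝ, (∀ i, ε i = 1 ∨ ε i = -1) → ∑ i, ε i * α i ≠ 0

def IsShort {m : ℕ} (α : Fin m → ℝ) (I : Finset (Fin m)) : Prop :=
  ∑ i ∈ I, α i < ∑ j ∈ Iᶜ, α j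

def Dominates {m : ℕ} (I J : Finset (Fin m)) : Prop :=
  ∃ f : {x // x ∈ I} → {x // x ∈ J}, StrictMono f ∧
    ∀ i : {x // x ∈ I}, (i : Fin m) ≤ (f i : Fin m)

def Sm {m : ℕ} (α : Fin (m + 1) → ℝ) : Set (Finset (Fin (m + 1))) :=
  {I | Fin.last m ∈ I ∧ IsShort α I}

def Gcode {m : ℕ} (α : Fin (m + 1) → ℝ) : Set (Finset (Fin (m + 1))) :=
  {I | I ∈ Sm α ∧ ∀ J ∈ Sm α, Dominates I J → I = J}

/-- The genetic order on genetic codes: every gene of the first is dominated by a gene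
of the second. -/
def GLe {m : ℕ} (α β : Fin (m + 1) → ℝ) : Prop :=
  ∀ A ∈ Gcode α, ∃ B ∈ Gcode β, Dominates A B

noncomputable def LK {n : ℕ} (K : Finset (Fin n)) (x : Fin n → ℝ) : ℝ :=
  ∑ i ∈ Kᶜ, x i - ∑ i ∈ K, x i

lemma isShort_iff {n : ℕ} (x : Fin n → ℝ) (K : Finset (Fin n)) :
    IsShort x K ↔ 0 < LK K x := by
  simp [IsShort, LK, sub_pos]

lemma LK_compl {n : ℕ} (K : Finset (Fin n)) (x : Fin n → ℝ) : LK Kᶜ x = - LK K x := by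
  simp [LK, compl_compl]

lemma LK_eq_sum {n : ℕ} (K : Finset (Fin n)) (x : Fin n → ℝ) :
    LK K x = ∑ i, (if i ∈ K then (-1 : ℝ) else 1) * x i := by
  rw [← Finset.sum_add_sum_compl K]
  have h1 : ∑ i ∈ K, (if i ∈ K then (-1 : ℝ) else 1) * x i = ∑ i ∈ K, -x i :=
    Finset.sum_congr rfl fun i hi => by simp [hi]
  have h2 : ∑ i ∈ Kᶜ, (if i ∈ K then (-1 : ℝ) else 1) * x i = ∑ i ∈ Kᶜ, x i :=
    Finset.sum_congr rfl fun i hi => by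
      simp [Finset.mem_compl.mp hi]
  rw [h1, h2, LK, Finset.sum_neg_distrib]
  ring

lemma generic_LK_ne {n : ℕ} {x : Fin n → ℝ} (h : IsGeneric x) (K : Finset (Fin n)) :
    LK K x ≠ 0 := by
  rw [LK_eq_sum]
  exact h _ fun i => by by_cases hi : i ∈ K <;> simp [hi]

lemma LK_comb {n : ℕ} (K : Finset (Fin n)) (x y : Fin n → ℝ) (e : ℝ) :
    LK K (fun i => x i + e * y i) = LK K x + e * LK K y := by
  simp only [LK, Finset.sum_add_distrib, ← Finset.mul_sum]
  ring

lemma dominates_refl {n : ℕ} (I : Finset (Fin n)) : Dominates I I :=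
  ⟨id, strictMono_id, fun _ => le_refl _⟩

lemma dominates_trans {n : ℕ} {I J K : Finset (Fin n)}
    (h1 : Dominates I J) (h2 : Dominates J K) : Dominates I K := by
  obtain ⟨f, hf, hf2⟩ := h1
  obtain ⟨g, hg, hg2⟩ := h2
  exact ⟨g ∘ f, hg.comp hf, fun i => (hf2 i).trans (hg2 (f i))⟩

lemma dominates_sum_le {n : ℕ} {I J : Finset (Fin n)} (h : Dominates I J)
    (γ : Fin n → ℝ) (hpos : ∀ i, 0 < γ i) (hmono : Monotone γ) :
    ∑ i ∈ I, γ i ≤ ∑ j ∈ J, γ j := by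
  obtain ⟨f, hf, hf2⟩ := h
  have hinj : Function.Injective fun x : {x // x ∈ I} => (f x : Fin n) :=
    Subtype.val_injective.comp hf.injective
  calc ∑ i ∈ I, γ i = ∑ x ∈ I.attach, γ x.val := (Finset.sum_attach I γ).symm
    _ ≤ ∑ x ∈ I.attach, γ (f x).val :=
        Finset.sum_le_sum fun x _ => hmono (hf2 x)
    _ = ∑ j ∈ I.attach.image (fun x => (f x : Fin n)), γ j :=
        (Finset.sum_image fun x _ y _ hxy => hinj hxy).symm
    _ ≤ ∑ j ∈ J, γ j := by
        apply Finset.sum_le_sum_of_subset_of_nonneg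
        · intro j hj
          obtain ⟨x, _, rfl⟩ := Finset.mem_image.mp hj
          exact (f x).2
        · exact fun j _ _ => (hpos j).le

lemma Sm_dclosed {m : ℕ} {γ : Fin (m + 1) → ℝ} (hpos : ∀ i, 0 < γ i) (hmono : Monotone γ)
    {I J : Finset (Fin (m + 1))} (h : Dominates I J) (hJ : J ∈ Sm γ)
    (hlast : Fin.last m ∈ I) : I ∈ Sm γ := by
  refine ⟨hlast, ?_⟩
  have h1 := dominates_sum_le h γ hpos hmono
  have h2 := (isShort_iff γ J).mp hJ.2
  rw [isShort_iff]
  rw [LK] at h2 ⊢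
  have e1 : ∑ i ∈ Iᶜ, γ i = ∑ i, γ i - ∑ i ∈ I, γ i := by
    rw [← Finset.sum_add_sum_compl I]; ring
  have e2 : ∑ i ∈ Jᶜ, γ i = ∑ i, γ i - ∑ i ∈ J, γ i := by
    rw [← Finset.sum_add_sum_compl J]; ring
  rw [e1]
  rw [e2] at h2
  linarith

noncomputable def wgt {n : ℕ} (I : Finset (Fin n)) : ℕ := ∑ i ∈ I, ((i : ℕ) + 1)

lemma dominates_wgt_le {n : ℕ} {I J : Finset (Fin n)} (h : Dominates I J) :
    wgt I ≤ wgt J := by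
  obtain ⟨f, hf, hf2⟩ := h
  have hinj : Function.Injective fun x : {x // x ∈ I} => (f x : Fin n) :=
    Subtype.val_injective.comp hf.injective
  calc wgt I = ∑ x ∈ I.attach, ((x.val : ℕ) + 1) :=
        (Finset.sum_attach I fun i => (i : ℕ) + 1).symm
    _ ≤ ∑ x ∈ I.attach, (((f x : Fin n) : ℕ) + 1) :=
        Finset.sum_le_sum fun x _ => by have := hf2 x; omega
    _ = ∑ j ∈ I.attach.image (fun x => (f x : Fin n)), ((j : ℕ) + 1) :=
        (Finset.sum_image (f := fun j : Fin n => (j : ℕ) + 1) fun x _ y _ hxy => hinj hxy).symm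
    _ ≤ wgt J := Finset.sum_le_sum_of_subset (fun j hj => by
        obtain ⟨x, _, rfl⟩ := Finset.mem_image.mp hj
        exact (f x).2)

lemma dominates_eq_of_wgt_le {n : ℕ} {I J : Finset (Fin n)} (h : Dominates I J)
    (hw : wgt J ≤ wgt I) : I = J := by
  obtain ⟨f, hf, hf2⟩ := h
  have hinj : Function.Injective fun x : {x // x ∈ I} => (f x : Fin n) :=
    Subtype.val_injective.comp hf.injective
  have e0 : wgt I = ∑ x ∈ I.attach, ((x.val : ℕ) + 1) :=
    (Finset.sum_attach I fun i => (i : ℕ) + 1).symm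
  have e1 : ∑ x ∈ I.attach, (((f x : Fin n) : ℕ) + 1)
      = ∑ j ∈ I.attach.image (fun x => (f x : Fin n)), ((j : ℕ) + 1) :=
    (Finset.sum_image (f := fun j : Fin n => (j : ℕ) + 1) fun x _ y _ hxy => hinj hxy).symm
  have hsub : I.attach.image (fun x => (f x : Fin n)) ⊆ J := fun j hj => by
    obtain ⟨x, _, rfl⟩ := Finset.mem_image.mp hj
    exact (f x).2
  have le1 : ∀ x ∈ I.attach, ((x.val : ℕ) + 1) ≤ (((f x : Fin n) : ℕ) + 1) :=
    fun x _ => by have := hf2 x; omega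
  have le2 : ∑ x ∈ I.attach, (((f x : Fin n) : ℕ) + 1) ≤ wgt J := by
    rw [e1]; exact Finset.sum_le_sum_of_subset hsub
  have hsum1 : ∑ x ∈ I.attach, ((x.val : ℕ) + 1) = ∑ x ∈ I.attach, (((f x : Fin n) : ℕ) + 1) :=
    le_antisymm (Finset.sum_le_sum le1) (by rw [← e0]; exact le2.trans hw)
  have hptwise := (Finset.sum_eq_sum_iff_of_le le1).mp hsum1
  have hfix : ∀ x : {x // x ∈ I}, (f x : Fin n) = x.val := by
    intro x
    have := hptwise x (Finset.mem_attach _ x)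
    exact Fin.ext (by omega)
  have hIJ : I ⊆ J := fun i hi => by
    have := (f ⟨i, hi⟩).2
    rwa [hfix ⟨i, hi⟩] at this
  by_contra hne
  have hss : I ⊂ J := hIJ.ssubset_of_ne hne
  obtain ⟨j, hjJ, hjI⟩ := Finset.exists_of_ssubset hss
  have : wgt I < wgt J :=
    Finset.sum_lt_sum_of_subset hIJ hjJ hjI (by omega) (fun _ _ _ => by omega)
  omega

lemma exists_gcode_above {m : ℕ} (γ : Fin (m + 1) → ℝ) {A : Finset (Fin (m + 1))}
    (hA : A ∈ Sm γ) : ∃ B ∈ Gcode γ, Dominates A B := by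
  have hfin : ({C | C ∈ Sm γ ∧ Dominates A C} : Set (Finset (Fin (m + 1)))).Finite :=
    Set.toFinite _
  obtain ⟨B, hB, hBmax⟩ := Set.exists_max_image _ wgt hfin ⟨A, hA, dominates_refl A⟩
  refine ⟨B, ⟨hB.1, fun C hC hdom => ?_⟩, hB.2⟩
  exact dominates_eq_of_wgt_le hdom (hBmax C ⟨hC, dominates_trans hB.2 hdom⟩)

lemma GLe_iff_subset {m : ℕ} {α β : Fin (m + 1) → ℝ}
    (hposα : ∀ i, 0 < α i) (hmonoα : Monotone α)
    (hposβ : ∀ i, 0 < β i) (hmonoβ : Monotone β) :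
    GLe α β ↔ Sm α ⊆ Sm β := by
  constructor
  · intro h I hI
    obtain ⟨B, hB, hdom⟩ := exists_gcode_above α hI
    obtain ⟨B', hB', hdom'⟩ := h B hB
    exact Sm_dclosed hposβ hmonoβ (dominates_trans hdom hdom') hB'.1 hI.1
  · intro h A hA
    obtain ⟨B, hB, hdom⟩ := exists_gcode_above β (h hA.1)
    exact ⟨B, hB, hdom⟩

lemma exists_small_s {ι : Type*} [DecidableEq ι] (s : Finset ι) (b d : ι → ℝ)
    (h : ∀ j ∈ s, 0 < b j ∨ (b j = 0 ∧ 0 < d j)) :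
    ∃ ε > 0, ∀ t : ℝ, 0 < t → t ≤ ε → ∀ j ∈ s, 0 < b j + t * d j := by
  classical
  induction s using Finset.induction_on with
  | empty => exact ⟨1, one_pos, fun t _ _ j hj => absurd hj (Finset.notMem_empty j)⟩
  | @insert a s' hns ih =>
    obtain ⟨ε, hε, hεs⟩ := ih fun j hj => h j (Finset.mem_insert_of_mem hj)
    have ha := h a (Finset.mem_insert_self a s')
    rcases ha with hb | ⟨hb0, hd⟩
    · refine ⟨min ε (b a / (|d a| + 1)), lt_min hε (by positivity), fun t ht htle j hj => ?_⟩
      rcases Finset.mem_insert.mp hj with rfl | hj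
      · have h1 : t ≤ b j / (|d j| + 1) := htle.trans (min_le_right _ _)
        have h2 : t * |d j| ≤ (b j / (|d j| + 1)) * |d j| := by
          apply mul_le_mul_of_nonneg_right h1 (abs_nonneg _)
        have h3 : (b j / (|d j| + 1)) * |d j| < b j := by
          rw [div_mul_eq_mul_div, div_lt_iff₀ (by positivity)]
          nlinarith [abs_nonneg (d j)]
        have h5 : t * (-|d j|) ≤ t * d j := mul_le_mul_of_nonneg_left (neg_abs_le _) ht.le
        nlinarith
      · exact hεs t ht (htle.trans (min_le_left _ _)) j hj
    · refine ⟨ε, hε, fun t ht htle j hj => ?_⟩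
      rcases Finset.mem_insert.mp hj with rfl | hj
      · rw [hb0, zero_add]; exact mul_pos ht hd
      · exact hεs t ht htle j hj

lemma exists_good_r {n : ℕ} (S : Set (Fin n → ℝ)) (hS : S.Finite) (hne : ∀ c ∈ S, c ≠ 0) :
    ∃ r : ℝ, 1 < r ∧ ∀ c ∈ S, ∑ i, c i * r ^ (i : ℕ) ≠ 0 := by
  classical
  set P : (Fin n → ℝ) → Polynomial ℝ := fun c => ∑ i, Polynomial.C (c i) * Polynomial.X ^ (i : ℕ)
    with hP
  have hPne : ∀ c ∈ S, P c ≠ 0 := by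
    intro c hc
    obtain ⟨i₀, hi₀⟩ := Function.ne_iff.mp (hne c hc)
    have hcoeff : (P c).coeff (i₀ : ℕ) = c i₀ := by
      rw [hP]
      rw [Polynomial.finset_sum_coeff]
      rw [Finset.sum_eq_single i₀]
      · simp [Polynomial.coeff_C_mul_X_pow]
      · intro i _ hne'
        rw [Polynomial.coeff_C_mul_X_pow]
        simp only [ite_eq_right_iff]
        intro hval
        exact absurd (Fin.val_injective hval.symm) hne'
      · intro hmem; exact absurd (Finset.mem_univ i₀) hmem
    intro h0
    rw [h0] at hcoeff
    simp at hcoeff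
    exact hi₀ hcoeff.symm
  have hbad : (⋃ c ∈ S, {x : ℝ | (P c).IsRoot x}).Finite := by
    refine Set.Finite.biUnion hS fun c hc => ?_
    exact Polynomial.finite_setOf_isRoot (hPne c hc)
  obtain ⟨ub, hub⟩ := hbad.bddAbove
  refine ⟨max 2 (ub + 1), lt_of_lt_of_le one_lt_two (le_max_left _ _), fun c hc h0 => ?_⟩
  have hroot : (P c).IsRoot (max 2 (ub + 1)) := by
    rw [Polynomial.IsRoot, hP]
    rw [Polynomial.eval_finset_sum]
    simpa using h0
  have : max 2 (ub + 1) ∈ ⋃ c ∈ S, {x : ℝ | (P c).IsRoot x} :=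
    Set.mem_biUnion hc hroot
  have := hub this
  have : ub + 1 ≤ ub := le_trans (le_max_right 2 (ub + 1)) this
  linarith

lemma LK_sub {n : ℕ} (K : Finset (Fin n)) (x y : Fin n → ℝ) :
    LK K (fun i => x i - y i) = LK K x - LK K y := by
  simp only [LK, Finset.sum_sub_distrib]
  ring

lemma exists_Sm_between {m : ℕ} {α β : Fin (m + 1) → ℝ}
    (hposα : ∀ i, 0 < α i) (hmonoα : Monotone α) (hgenα : IsGeneric α)
    (hposβ : ∀ i, 0 < β i) (hmonoβ : Monotone β) (hgenβ : IsGeneric β)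
    (hsub : Sm α ⊆ Sm β) {K₁ K₂ : Finset (Fin (m + 1))}
    (hK₁ : K₁ ∈ Sm β) (hK₁' : K₁ ∉ Sm α) (hK₂ : K₂ ∈ Sm β) (hK₂' : K₂ ∉ Sm α)
    (hKne : K₁ ≠ K₂) :
    ∃ γ : Fin (m + 1) → ℝ, (∀ i, 0 < γ i) ∧ Monotone γ ∧ IsGeneric γ ∧
      Sm α ⊂ Sm γ ∧ Sm γ ⊂ Sm β := by
  classical
  set D : Set (Finset (Fin (m + 1))) := {K | K ∈ Sm β ∧ K ∉ Sm α} with hD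
  have hDlast : ∀ K ∈ D, Fin.last m ∈ K := fun K hK => hK.1.1
  set a : Finset (Fin (m + 1)) → ℝ := fun K => LK K β - LK K α with ha
  have hDβ : ∀ K ∈ D, 0 < LK K β := fun K hK => (isShort_iff β K).mp hK.1.2
  have hDα : ∀ K ∈ D, LK K α < 0 := by
    intro K hK
    have h1 : ¬ IsShort α K := fun hsh => hK.2 ⟨hDlast K hK, hsh⟩
    rw [isShort_iff] at h1
    exact lt_of_le_of_ne (not_lt.mp h1) (generic_LK_ne hgenα K)
  have hDa : ∀ K ∈ D, 0 < a K := fun K hK => by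
    have := hDβ K hK; have := hDα K hK; rw [ha]; dsimp only; linarith
  set tK : Finset (Fin (m + 1)) → ℝ := fun K => (-(LK K α)) / a K with htK
  have htK0 : ∀ K ∈ D, 0 < tK K := fun K hK =>
    div_pos (neg_pos.mpr (hDα K hK)) (hDa K hK)
  have htK1 : ∀ K ∈ D, tK K < 1 := fun K hK => by
    rw [htK]; dsimp only
    rw [div_lt_one (hDa K hK)]
    have := hDβ K hK; rw [ha]; dsimp only; linarith
  have htKa : ∀ K ∈ D, LK K α = -(tK K * a K) := fun K hK => by
    rw [htK]; dsimp only
    rw [div_mul_cancel₀ _ (hDa K hK).ne']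
    ring
  obtain ⟨Km, hKmD, hKmmin⟩ :=
    Set.exists_min_image D tK (Set.toFinite D) ⟨K₁, hK₁, hK₁'⟩
  set ts : ℝ := tK Km with hts
  have hts0 : 0 < ts := htK0 Km hKmD
  have hts1 : ts < 1 := htK1 Km hKmD
  set M : Set (Finset (Fin (m + 1))) := {K | K ∈ D ∧ tK K = ts} with hM
  have hKmM : Km ∈ M := ⟨hKmD, rfl⟩
  set z : Fin (m + 1) → ℝ := fun i => α i + ts * (β i - α i) with hz
  have hLKz : ∀ K, LK K z = LK K α + ts * a K := by
    intro K
    have : LK K (fun i => α i + ts * ((fun i => β i - α i) i)) = LK K α + ts * LK K (fun i => β i - α i) :=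
      LK_comb K α (fun i => β i - α i) ts
    rw [hz]
    rw [this, LK_sub, ha]
  have hzD : ∀ K ∈ D, LK K z = a K * (ts - tK K) := by
    intro K hK
    rw [hLKz, htKa K hK]
    ring
  have hzposSm : ∀ K ∈ Sm α, 0 < LK K z := by
    intro K hK
    have h1 : 0 < LK K α := (isShort_iff α K).mp hK.2
    have h2 : 0 < LK K β := (isShort_iff β K).mp (hsub hK).2
    rw [hLKz, ha]
    dsimp only
    nlinarith
  have hznegSm : ∀ K, Fin.last m ∈ K → K ∉ Sm β → LK K z < 0 := by
    intro K hlast hKβ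
    have hKα : K ∉ Sm α := fun h => hKβ (hsub h)
    have h1 : LK K α < 0 := by
      have h1 : ¬ IsShort α K := fun hsh => hKα ⟨hlast, hsh⟩
      rw [isShort_iff] at h1
      exact lt_of_le_of_ne (not_lt.mp h1) (generic_LK_ne hgenα K)
    have h2 : LK K β < 0 := by
      have h2 : ¬ IsShort β K := fun hsh => hKβ ⟨hlast, hsh⟩
      rw [isShort_iff] at h2
      exact lt_of_le_of_ne (not_lt.mp h2) (generic_LK_ne hgenβ K)
    rw [hLKz, ha]
    dsimp only
    nlinarith
  have hzpos : ∀ i, 0 < z i := by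
    intro i
    have := hposα i; have := hposβ i
    rw [hz]; dsimp only; nlinarith
  have hzmono : ∀ i j : Fin (m + 1), i ≤ j → z i ≤ z j := by
    intro i j hij
    have h1 := hmonoα hij; have h2 := hmonoβ hij
    rw [hz]; dsimp only; nlinarith
  have hztie : ∀ i j : Fin (m + 1), i ≤ j → z i = z j → α i = α j ∧ β i = β j := by
    intro i j hij hzij
    have h1 := hmonoα hij; have h2 := hmonoβ hij
    rw [hz] at hzij; dsimp only at hzij
    constructor <;> nlinarith
  -- the sign vectors
  set Cv : Finset (Fin (m + 1)) → Fin (m + 1) → ℝ :=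
    fun K i => if i ∈ K then (-1 : ℝ) else 1 with hCv
  set S : Set (Fin (m + 1) → ℝ) :=
    (fun p : Finset (Fin (m + 1)) × Finset (Fin (m + 1)) =>
      fun i => a p.2 * Cv p.1 i - a p.1 * Cv p.2 i) ''
      {p | p.1 ∈ M ∧ p.2 ∈ M ∧ p.1 ≠ p.2} with hS
  have hSfin : S.Finite := Set.Finite.image _ (Set.toFinite _)
  have hSne : ∀ c ∈ S, c ≠ 0 := by
    rintro c ⟨⟨K, K'⟩, ⟨hKM, hK'M, hne⟩, rfl⟩
    intro h0
    have haK := hDa K hKM.1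
    have haK' := hDa K' hK'M.1
    by_cases haa : a K = a K'
    · -- find i where membership differs
      have : ∃ i, (i ∈ K) ≠ (i ∈ K') := by
        by_contra hc
        push_neg at hc
        exact hne (Finset.ext fun i => by
          constructor <;> intro h <;> [exact (hc i) ▸ h; exact (hc i) ▸ h])
      obtain ⟨i, hi⟩ := this
      have := congrFun h0 i
      simp only [hCv, Pi.zero_apply] at this
      by_cases h1 : i ∈ K <;> by_cases h2 : i ∈ K' <;>
        simp [h1, h2] at this hi <;> nlinarith
    · have := congrFun h0 (Fin.last m)
      simp only [hCv, Pi.zero_apply, hDlast K hKM.1, hDlast K' hK'M.1, if_pos] at this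
      have : a K = a K' := by nlinarith
      exact haa this
  obtain ⟨r, hr1, hrS⟩ := exists_good_r S hSfin hSne
  set w₀ : Fin (m + 1) → ℝ := fun i => r ^ (i : ℕ) with hw₀
  have hw₀mono : ∀ i j : Fin (m + 1), i < j → w₀ i < w₀ j := by
    intro i j hij
    exact pow_lt_pow_right₀ hr1 hij
  set cK : Finset (Fin (m + 1)) → ℝ := fun K => -(LK K w₀) / a K with hcK
  have hcKdistinct : ∀ K ∈ M, ∀ K' ∈ M, K ≠ K' → cK K ≠ cK K' := by
    intro K hKM K' hK'M hne heq
    have haK := hDa K hKM.1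
    have haK' := hDa K' hK'M.1
    have h1 : a K' * LK K w₀ = a K * LK K' w₀ := by
      rw [hcK] at heq
      dsimp only at heq
      field_simp at heq
      linarith
    have hc : (fun i => a K' * Cv K i - a K * Cv K' i) ∈ S :=
      ⟨(K, K'), ⟨hKM, hK'M, hne⟩, rfl⟩
    apply hrS _ hc
    have e1 : ∑ i, (a K' * Cv K i - a K * Cv K' i) * r ^ (i : ℕ)
        = a K' * LK K w₀ - a K * LK K' w₀ := by
      rw [LK_eq_sum, LK_eq_sum, Finset.mul_sum, Finset.mul_sum, ← Finset.sum_sub_distrib]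
      refine Finset.sum_congr rfl fun i _ => ?_
      rw [hCv, hw₀]
      ring
    rw [e1, h1]
    ring
  obtain ⟨K₀, hK₀M, hK₀min⟩ :=
    Set.exists_min_image M cK (Set.toFinite M) ⟨Km, hKmM⟩
  have hK₀lt : ∀ K ∈ M, K ≠ K₀ → cK K₀ < cK K := by
    intro K hKM hne
    exact lt_of_le_of_ne (hK₀min K hKM) (hcKdistinct K₀ hK₀M K hKM (Ne.symm hne))
  obtain ⟨cc, hcc1, hcc2⟩ : ∃ cc, cK K₀ < cc ∧ ∀ K ∈ M, K ≠ K₀ → cc < cK K := by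
    by_cases hMs : ∃ K, K ∈ M ∧ K ≠ K₀
    · obtain ⟨K', hK'⟩ := Set.exists_min_image {K | K ∈ M ∧ K ≠ K₀} cK (Set.toFinite _) hMs
      refine ⟨(cK K₀ + cK K') / 2, by have := hK₀lt K' hK'.1.1 hK'.1.2; linarith, ?_⟩
      intro K hKM hne
      have h1 := hK'.2 K ⟨hKM, hne⟩
      have h2 := hK₀lt K' hK'.1.1 hK'.1.2
      linarith
    · push_neg at hMs
      exact ⟨cK K₀ + 1, by linarith, fun K hKM hne => absurd (hMs K hKM) (by simp [hne])⟩
  set v : Fin (m + 1) → ℝ := fun i => w₀ i + cc * (β i - α i) with hv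
  have hLKv : ∀ K, LK K v = LK K w₀ + cc * a K := by
    intro K
    have : LK K (fun i => w₀ i + cc * ((fun i => β i - α i) i))
        = LK K w₀ + cc * LK K (fun i => β i - α i) :=
      LK_comb K w₀ (fun i => β i - α i) cc
    rw [hv, this, LK_sub, ha]
  have hvK₀ : 0 < LK K₀ v := by
    have haK := hDa K₀ hK₀M.1
    rw [hLKv]
    rw [hcK] at hcc1
    dsimp only at hcc1
    rw [div_lt_iff₀ haK] at hcc1
    nlinarith
  have hvM : ∀ K ∈ M, K ≠ K₀ → LK K v < 0 := by
    intro K hKM hne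
    have haK := hDa K hKM.1
    have := hcc2 K hKM hne
    rw [hcK] at this
    dsimp only at this
    rw [lt_div_iff₀ haK] at this
    rw [hLKv]
    nlinarith
  -- Good predicate and sign σ
  set Good : Finset (Fin (m + 1)) → Prop := fun K => K ∈ Sm α ∨ K = K₀ with hGood
  set σ : Finset (Fin (m + 1)) → ℝ := fun K => if Good K then 1 else -1 with hσ
  have hK₀last : Fin.last m ∈ K₀ := hDlast K₀ hK₀M.1
  have hsigns : ∀ K ∈ Finset.univ.filter (fun K => Fin.last m ∈ K),
      0 < σ K * LK K z ∨ (σ K * LK K z = 0 ∧ 0 < σ K * LK K v) := by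
    intro K hK
    have hlast : Fin.last m ∈ K := (Finset.mem_filter.mp hK).2
    by_cases hKα : K ∈ Sm α
    · left
      have : σ K = 1 := by rw [hσ]; exact if_pos (Or.inl hKα)
      rw [this, one_mul]
      exact hzposSm K hKα
    by_cases hKβ : K ∈ Sm β
    · have hKD : K ∈ D := ⟨hKβ, hKα⟩
      by_cases hKM : K ∈ M
      · by_cases hKK₀ : K = K₀
        · subst hKK₀
          have hσ1 : σ K = 1 := by rw [hσ]; exact if_pos (Or.inr rfl)
          right
          constructor
          · rw [hσ1, one_mul, hzD K hKD, hKM.2]; ring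
          · rw [hσ1, one_mul]; exact hvK₀
        · have hσ1 : σ K = -1 := by
            rw [hσ]; exact if_neg (by rintro (h | h); exacts [hKα h, hKK₀ h])
          right
          constructor
          · rw [hσ1, hzD K hKD, hKM.2]; ring
          · rw [hσ1]
            have := hvM K hKM hKK₀
            nlinarith
      · have hσ1 : σ K = -1 := by
          rw [hσ]
          refine if_neg ?_
          rintro (h | h)
          · exact hKα h
          · exact hKM (h ▸ hK₀M)
        left
        rw [hσ1]
        have h1 : ts ≤ tK K := hKmmin K hKD
        have h2 : tK K ≠ ts := fun h => hKM ⟨hKD, h⟩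
        have h3 : ts < tK K := lt_of_le_of_ne h1 (Ne.symm h2)
        have := hzD K hKD
        have haK := hDa K hKD
        nlinarith
    · have hσ1 : σ K = -1 := by
        rw [hσ]
        refine if_neg ?_
        rintro (h | h)
        · exact hKα h
        · exact hKβ (h ▸ hK₀M.1.1)
      left
      rw [hσ1]
      have := hznegSm K hlast hKβ
      nlinarith
  -- choose s small
  obtain ⟨ε₁, hε₁, hc₁⟩ := exists_small_s Finset.univ z v (fun i _ => Or.inl (hzpos i))
  obtain ⟨ε₂, hε₂, hc₂⟩ := exists_small_s (Finset.univ : Finset (Fin m))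
    (fun j => z j.succ - z j.castSucc) (fun j => v j.succ - v j.castSucc)
    (by
      intro j _
      have hle : z j.castSucc ≤ z j.succ := hzmono _ _ (Fin.castSucc_lt_succ (i := j)).le
      rcases eq_or_lt_of_le hle with heq | hlt
      · right
        refine ⟨by linarith, ?_⟩
        obtain ⟨hα, hβ⟩ := hztie _ _ (Fin.castSucc_lt_succ (i := j)).le heq
        have : v j.succ - v j.castSucc = w₀ j.succ - w₀ j.castSucc := by
          rw [hv]; dsimp only; rw [hα, hβ]; ring
        rw [this]
        have := hw₀mono _ _ (Fin.castSucc_lt_succ (i := j))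
        linarith
      · left; linarith)
  obtain ⟨ε₃, hε₃, hc₃⟩ := exists_small_s (Finset.univ.filter (fun K => Fin.last m ∈ K))
    (fun K => σ K * LK K z) (fun K => σ K * LK K v) hsigns
  set s : ℝ := min ε₁ (min ε₂ ε₃) with hs
  have hs0 : 0 < s := lt_min hε₁ (lt_min hε₂ hε₃)
  set γ : Fin (m + 1) → ℝ := fun i => z i + s * v i with hγ
  have hγpos : ∀ i, 0 < γ i := fun i =>
    hc₁ s hs0 (min_le_left _ _) i (Finset.mem_univ i)
  have hγmono : Monotone γ := by
    rw [Fin.monotone_iff_le_succ]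
    intro j
    have := hc₂ s hs0 ((min_le_right _ _).trans (min_le_left _ _)) j (Finset.mem_univ j)
    rw [hγ]; dsimp only; linarith
  have hLKγ : ∀ K, LK K γ = LK K z + s * LK K v := fun K => LK_comb K z v s
  have hγsign : ∀ K, Fin.last m ∈ K → 0 < σ K * LK K γ := by
    intro K hlast
    have := hc₃ s hs0 ((min_le_right _ _).trans (min_le_right _ _)) K
      (Finset.mem_filter.mpr ⟨Finset.mem_univ K, hlast⟩)
    rw [hLKγ]
    nlinarith [this]
  have hγgen : IsGeneric γ := by
    intro ε hε
    set K : Finset (Fin (m + 1)) := Finset.univ.filter (fun i => ε i = -1) with hK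
    have hsum : ∑ i, ε i * γ i = LK K γ := by
      rw [LK_eq_sum]
      refine Finset.sum_congr rfl fun i _ => ?_
      rcases hε i with h | h
      · rw [h, if_neg]
        rw [hK]
        simp only [Finset.mem_filter, Finset.mem_univ, true_and]
        rw [h]; norm_num
      · rw [h, if_pos]
        rw [hK]
        simp only [Finset.mem_filter, Finset.mem_univ, true_and]
        exact h
    rw [hsum]
    by_cases hlast : Fin.last m ∈ K
    · have := hγsign K hlast
      intro h0; rw [h0] at this; simp at this
    · have hlast' : Fin.last m ∈ Kᶜ := Finset.mem_compl.mpr hlast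
      have := hγsign Kᶜ hlast'
      rw [LK_compl] at this
      intro h0; rw [h0] at this; simp at this
  have hSmγ : Sm γ = insert K₀ (Sm α) := by
    ext K
    constructor
    · rintro ⟨hlast, hshort⟩
      rw [isShort_iff] at hshort
      by_cases hG : Good K
      · rw [hGood] at hG
        rcases hG with h | h
        · exact Set.mem_insert_of_mem _ h
        · rw [h]; exact Set.mem_insert _ _
      · have := hγsign K hlast
        rw [hσ] at this
        dsimp only at this
        rw [if_neg hG] at this
        nlinarith
    · intro hK
      rcases Set.mem_insert_iff.mp hK with rfl | hKα
      · refine ⟨hK₀last, ?_⟩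
        rw [isShort_iff]
        have := hγsign K hK₀last
        have hσ1 : σ K = 1 := by rw [hσ]; exact if_pos (Or.inr rfl)
        rw [hσ1, one_mul] at this
        exact this
      · refine ⟨hKα.1, ?_⟩
        rw [isShort_iff]
        have := hγsign K hKα.1
        have hσ1 : σ K = 1 := by rw [hσ]; exact if_pos (Or.inl hKα)
        rw [hσ1, one_mul] at this
        exact this
  have hK₀notα : K₀ ∉ Sm α := hK₀M.1.2
  have hK₀β : K₀ ∈ Sm β := hK₀M.1.1
  refine ⟨γ, hγpos, hγmono, hγgen, ?_, ?_⟩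
  · rw [hSmγ]
    exact (Set.subset_insert _ _).ssubset_of_ne
      (fun h => hK₀notα (h ▸ Set.mem_insert K₀ (Sm α)))
  · rw [hSmγ]
    constructor
    · intro K hK
      rcases Set.mem_insert_iff.mp hK with rfl | hKα
      · exact hK₀β
      · exact hsub hKα
    · intro hcon
      rcases ne_or_eq K₁ K₀ with h1 | h1
      · have := hcon hK₁
        rcases Set.mem_insert_iff.mp this with h | h
        · exact h1 h
        · exact hK₁' h
      · have h2 : K₂ ≠ K₀ := fun h => hKne (h1.trans h.symm)
        have := hcon hK₂
        rcases Set.mem_insert_iff.mp this with h | h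
        · exact h2 h
        · exact hK₂' h

/-- `G(β)` covers `G(α)`: `G(α) ≺ G(β)` and no genetic code of a generic length vector
lies strictly between. -/
def GCovers {m : ℕ} (α β : Fin (m + 1) → ℝ) : Prop :=
  GLe α β ∧ ¬ GLe β α ∧
    ¬ ∃ γ : Fin (m + 1) → ℝ, (∀ i, 0 < γ i) ∧ Monotone γ ∧ IsGeneric γ ∧
        (GLe α γ ∧ ¬ GLe γ α) ∧ (GLe γ β ∧ ¬ GLe β γ)

theorem stmt7 {m : ℕ} (α β : Fin (m + 1) → ℝ)
    (hposα : ∀ i, 0 < α i) (hmonoα : Monotone α) (hgenα : IsGeneric α)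
    (hposβ : ∀ i, 0 < β i) (hmonoβ : Monotone β) (hgenβ : IsGeneric β) :
    GCovers α β ↔
      ∃! J : Finset (Fin (m + 1)), J ∉ Sm α ∧ Sm β = insert J (Sm α) := by
  constructor
  · rintro ⟨h1, h2, h3⟩
    have hsub : Sm α ⊆ Sm β := (GLe_iff_subset hposα hmonoα hposβ hmonoβ).mp h1
    have hnsub : ¬ Sm β ⊆ Sm α :=
      fun h => h2 ((GLe_iff_subset hposβ hmonoβ hposα hmonoα).mpr h)
    obtain ⟨J, hJβ, hJα⟩ : ∃ J, J ∈ Sm β ∧ J ∉ Sm α := by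
      by_contra hc
      push_neg at hc
      exact hnsub hc
    have huniq : ∀ K, K ∈ Sm β → K ∉ Sm α → K = J := by
      intro K hKβ hKα
      by_contra hne
      obtain ⟨γ, hγp, hγm, hγg, hss1, hss2⟩ :=
        exists_Sm_between hposα hmonoα hgenα hposβ hmonoβ hgenβ hsub
          hJβ hJα hKβ hKα (fun h => hne h.symm)
      refine h3 ⟨γ, hγp, hγm, hγg, ⟨?_, ?_⟩, ?_, ?_⟩
      · exact (GLe_iff_subset hposα hmonoα hγp hγm).mpr hss1.subset
      · exact fun h => hss1.not_subset ((GLe_iff_subset hγp hγm hposα hmonoα).mp h)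
      · exact (GLe_iff_subset hγp hγm hposβ hmonoβ).mpr hss2.subset
      · exact fun h => hss2.not_subset ((GLe_iff_subset hposβ hmonoβ hγp hγm).mp h)
    refine ⟨J, ⟨hJα, ?_⟩, ?_⟩
    · ext K
      constructor
      · intro hK
        by_cases h : K ∈ Sm α
        · exact Set.mem_insert_of_mem _ h
        · rw [huniq K hK h]; exact Set.mem_insert _ _
      · intro hK
        rcases Set.mem_insert_iff.mp hK with rfl | h
        · exact hJβ
        · exact hsub h
    · rintro J' ⟨hJ'α, hJ'eq⟩
      have : J' ∈ Sm β := by rw [hJ'eq]; exact Set.mem_insert _ _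
      exact huniq J' this hJ'α
  · rintro ⟨J, ⟨hJα, hJeq⟩, _⟩
    have hJβ : J ∈ Sm β := by rw [hJeq]; exact Set.mem_insert _ _
    have hsub : Sm α ⊆ Sm β := by rw [hJeq]; exact Set.subset_insert _ _
    refine ⟨(GLe_iff_subset hposα hmonoα hposβ hmonoβ).mpr hsub, ?_, ?_⟩
    · intro h
      exact hJα ((GLe_iff_subset hposβ hmonoβ hposα hmonoα).mp h hJβ)
    · rintro ⟨γ, hγp, hγm, hγg, ⟨hαγ, hγα⟩, hγβ, hβγ⟩
      have h1 : Sm α ⊆ Sm γ := (GLe_iff_subset hposα hmonoα hγp hγm).mp hαγ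
      have h2 : ¬ Sm γ ⊆ Sm α :=
        fun h => hγα ((GLe_iff_subset hγp hγm hposα hmonoα).mpr h)
      have h3 : Sm γ ⊆ Sm β := (GLe_iff_subset hγp hγm hposβ hmonoβ).mp hγβ
      obtain ⟨x, hxγ, hxα⟩ := Set.not_subset.mp h2
      have hxJ : x = J := by
        have hx := h3 hxγ
        rw [hJeq] at hx
        rcases Set.mem_insert_iff.mp hx with h | h
        · exact h
        · exact absurd h hxα
      have hβsubγ : Sm β ⊆ Sm γ := by
        rw [hJeq]
        intro K hK
        rcases Set.mem_insert_iff.mp hK with rfl | h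
        · exact hxJ ▸ hxγ
        · exact h1 h
      exact hβγ ((GLe_iff_subset hposβ hmonoβ hγp hγm).mpr hβsubγ)
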